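/- arXiv:2209.00855 — 5 statements merged into one kernel-verified Lean document; each statement's English description precedes it below -/
import Mathlib

section
/- Let N be a natural number and let l_1, ..., l_N, l'_1, ..., l'_N be integers such that (1) l_i > 0 and l'_i ≥ 0 for all i; (2) ∑_{i=1}^N l_i ≥ ∑_{i=1}^N l'_i; and (3) ∑_{i=1}^N l_i Q_i = ∑_{i=1}^N l'_i Q_i, where Q_1 = 1 and Q_i = ∏_{j=1}^{i-1} (l_j + 1) for i ≥ 2. Then l_i = l'_i for all i. -/
open Finset

/-- The weighted sum with maximal digits equals the product minus one. -/
theorem mixed_radix_max (n : ℕ) (b : ℕ → ℕ) :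
    (∑ i ∈ range n, b i * ∏ j ∈ range i, (b j + 1)) + 1 = ∏ j ∈ range n, (b j + 1) := by
  induction n with
  | zero => simp
  | succ n ih =>
    rw [Finset.sum_range_succ, Finset.prod_range_succ]
    have : b n * ∏ j ∈ range n, (b j + 1) + (∏ j ∈ range n, (b j + 1))
        = (∏ j ∈ range n, (b j + 1)) * (b n + 1) := by ring
    omega

/-- Auxiliary strengthened statement, by induction peeling the first coordinate.
`m` is the "deficit" from the maximal value `∏ (b j + 1) - 1`. -/
theorem mixed_radix_key : ∀ (n : ℕ) (b a : ℕ → ℕ) (m : ℕ),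
    (∀ i < n, 0 < b i) →
    (∑ i ∈ range n, a i * ∏ j ∈ range i, (b j + 1)) + m + 1 = ∏ j ∈ range n, (b j + 1) →
    (∑ i ∈ range n, b i) ≤ (∑ i ∈ range n, a i) + m ∧
      (m = 0 → (∑ i ∈ range n, a i) ≤ ∑ i ∈ range n, b i → ∀ i < n, a i = b i) := by
  intro n
  induction n with
  | zero =>
    intro b a m _ h
    simp only [range_zero, sum_empty, prod_empty] at h ⊢
    exact ⟨by omega, fun _ _ i hi => by omega⟩
  | succ n ih =>
    intro b a m hb h
    rw [Finset.sum_range_succ' (fun i => a i * ∏ j ∈ range i, (b j + 1)),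
        Finset.prod_range_succ' (fun j => b j + 1)] at h
    simp only [Finset.range_zero, Finset.prod_empty, mul_one] at h
    have hinner : ∀ i, (∏ j ∈ range (i + 1), (b j + 1))
        = (b 0 + 1) * ∏ j ∈ range i, (b (j + 1) + 1) := by
      intro i
      rw [Finset.prod_range_succ' (fun j => b j + 1)]
      ring
    simp only [hinner] at h
    set T := ∑ i ∈ range n, a (i + 1) * ∏ j ∈ range i, (b (j + 1) + 1) with hT
    set P := ∏ j ∈ range n, (b (j + 1) + 1) with hP
    have hTm : (b 0 + 1) * T
        = ∑ x ∈ range n, a (x + 1) * ((b 0 + 1) * ∏ j ∈ range x, (b (j + 1) + 1)) := by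
      rw [hT, Finset.mul_sum]
      exact Finset.sum_congr rfl (fun x _ => by ring)
    have hcomm : (b 0 + 1) * P = P * (b 0 + 1) := mul_comm _ _
    have harr : (b 0 + 1) * T + a 0 + m + 1 = (b 0 + 1) * P := by omega
    have hq : 0 < b 0 := hb 0 (Nat.succ_pos n)
    have hTP : T < P := by
      by_contra hc
      push_neg at hc
      have : (b 0 + 1) * P ≤ (b 0 + 1) * T := Nat.mul_le_mul_left _ hc
      omega
    obtain ⟨c, hc1, hPc⟩ : ∃ c, 1 ≤ c ∧ P = T + c := ⟨P - T, by omega, by omega⟩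
    have hmul : (b 0 + 1) * P = (b 0 + 1) * T + (b 0 + 1) * c := by rw [hPc]; ring
    have ha0 : a 0 + m + 1 = (b 0 + 1) * c := by omega
    have htail := ih (fun i => b (i + 1)) (fun i => a (i + 1)) (c - 1)
      (fun i hi => hb (i + 1) (by omega)) (by omega)
    obtain ⟨hle, heq⟩ := htail
    have hb0c : b 0 ≤ b 0 * c := Nat.le_mul_of_pos_right _ hc1
    have hbc : (b 0 + 1) * c = b 0 * c + c := by ring
    constructor
    · rw [Finset.sum_range_succ' b, Finset.sum_range_succ' a]
      omega
    · intro hm hsum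
      rw [Finset.sum_range_succ' b, Finset.sum_range_succ' a] at hsum
      have hcone : c = 1 := by
        by_contra hc2
        have hc2' : 2 ≤ c := by omega
        have : b 0 * 2 ≤ b 0 * c := Nat.mul_le_mul_left _ hc2'
        omega
      have htail_eq := heq (by omega) (by omega)
      intro i hi
      cases i with
      | zero => omega
      | succ j => exact htail_eq j (by omega)

/-- Theorem 1 of the paper: uniqueness of the target frequency for the
mixed-radix weights `Q i = ∏_{j<i} (l j + 1)` (with `Q 0 = 1`). -/
theorem mixed_radix_unique (N : ℕ) (l l' : Fin N → ℕ)
    (h1 : ∀ i, 0 < l i)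
    (h2 : ∑ i, l' i ≤ ∑ i, l i)
    (h3 : ∑ i, l i * ∏ j ∈ Finset.Iio i, (l j + 1)
        = ∑ i, l' i * ∏ j ∈ Finset.Iio i, (l j + 1)) :
    ∀ i, l i = l' i := by
  set L : ℕ → ℕ := fun i => if h : i < N then l ⟨i, h⟩ else 1 with hLdef
  set A : ℕ → ℕ := fun i => if h : i < N then l' ⟨i, h⟩ else 0 with hAdef
  have hLval : ∀ i : Fin N, L i.val = l i := fun i => by simp [hLdef, i.isLt]
  have hAval : ∀ i : Fin N, A i.val = l' i := fun i => by simp [hAdef, i.isLt]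
  have hinner : ∀ i : Fin N, (∏ j ∈ Finset.Iio i, (l j + 1))
      = ∏ j ∈ range i.val, (L j + 1) := by
    intro i
    rw [← Nat.Iio_eq_range, ← Fin.map_valEmbedding_Iio, Finset.prod_map]
    exact Finset.prod_congr rfl (fun j _ => by simp [hLdef, j.isLt])
  have hwsum : ∀ (f : Fin N → ℕ) (F : ℕ → ℕ), (∀ i : Fin N, F i.val = f i) →
      (∑ i, f i * ∏ j ∈ Finset.Iio i, (l j + 1))
        = ∑ i ∈ range N, F i * ∏ j ∈ range i, (L j + 1) := by
    intro f F hF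
    rw [← Fin.sum_univ_eq_sum_range (fun k => F k * ∏ j ∈ range k, (L j + 1)) N]
    exact Finset.sum_congr rfl (fun i _ => by rw [hF i, hinner i])
  have hsum : ∀ (f : Fin N → ℕ) (F : ℕ → ℕ), (∀ i : Fin N, F i.val = f i) →
      (∑ i, f i) = ∑ i ∈ range N, F i := by
    intro f F hF
    rw [← Fin.sum_univ_eq_sum_range F N]
    exact Finset.sum_congr rfl (fun i _ => (hF i).symm)
  have hLw := hwsum l L hLval
  have hAw := hwsum l' A hAval
  have hmax : (∑ i ∈ range N, L i * ∏ j ∈ range i, (L j + 1)) + 1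
      = ∏ j ∈ range N, (L j + 1) := mixed_radix_max N L
  have key := mixed_radix_key N L A 0
    (fun i hi => by simpa [hLdef, hi] using h1 ⟨i, hi⟩)
    (by rw [← hAw, ← h3, hLw]; omega)
  obtain ⟨_, heq⟩ := key
  have hfinal := heq rfl (by rw [← hsum l' A hAval, ← hsum l L hLval]; exact h2)
  intro i
  rw [← hLval i, ← hAval i]
  exact (hfinal i.val i.isLt).symm
end

section
/- Let N be a natural number and let l_1, ..., l_N, l'_1, ..., l'_N be integers such that (1) l_i > 0 and l'_i ≥ 0 for all i; (2) ∑_{i=1}^N l_i ≥ ∑_{i=1}^N l'_i; and (3) ∑_{i=1}^N l_i Q_i ≡ ∑_{i=1}^N l'_i Q_i (mod ∑_{i=1}^N l_i Q_i + 1), where Q_1 = 1 and Q_i = ∏_{j=1}^{i-1} (l_j + 1) for i ≥ 2. Then l_i = l'_i for all i. -/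
open Finset

/-- Splitting off the first digit of a mixed-radix sum. -/
private lemma mr_split (N : ℕ) (a w : ℕ → ℕ) :
    ∑ i ∈ range (N + 1), a i * ∏ j ∈ range i, (w j + 1)
      = a 0 + (w 0 + 1) * ∑ i ∈ range N, a (i + 1) * ∏ j ∈ range i, (w (j + 1) + 1) := by
  rw [Finset.sum_range_succ']
  simp only [Finset.prod_range_zero, mul_one, Finset.mul_sum]
  rw [add_comm]
  congr 1
  refine Finset.sum_congr rfl fun i _ => ?_
  rw [Finset.prod_range_succ']
  ring

/-- Auxiliary form of the theorem over `ℕ → ℕ` with `Finset.range`, proved by induction. -/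
private lemma mr_aux : ∀ (N : ℕ) (l l' : ℕ → ℕ),
    (∀ i < N, 0 < l i) →
    (∑ i ∈ range N, l' i ≤ ∑ i ∈ range N, l i) →
    ((∑ i ∈ range N, l i * ∏ j ∈ range i, (l j + 1)) + 1
      ∣ (∑ i ∈ range N, l' i * ∏ j ∈ range i, (l j + 1)) + 1) →
    ∀ i < N, l i = l' i := by
  intro N
  induction N with
  | zero => intro l l' _ _ _ i hi; omega
  | succ N ih =>
    intro l l' h1 h2 h3
    set P := l 0 + 1 with hP
    set Ft := ∑ i ∈ range N, l (i + 1) * ∏ j ∈ range i, (l (j + 1) + 1) with hFt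
    set G := ∑ i ∈ range N, l' (i + 1) * ∏ j ∈ range i, (l (j + 1) + 1) with hG
    rw [mr_split, mr_split] at h3
    -- `P ∣ l' 0 + 1`
    have hF1 : l 0 + P * Ft + 1 = P * (Ft + 1) := by rw [hP]; ring
    have hPd : P ∣ l' 0 + P * G + 1 := by
      refine dvd_trans ⟨Ft + 1, hF1⟩ h3
    have hPd' : P ∣ l' 0 + 1 := by
      have h : l' 0 + P * G + 1 = P * G + (l' 0 + 1) := by ring
      rw [h] at hPd
      exact (Nat.dvd_add_right (dvd_mul_right P G)).mp hPd
    obtain ⟨s, hs⟩ := hPd'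
    rcases s with _ | t
    · omega
    have hl'0 : l' 0 = l 0 + P * t := by
      have : P * (t + 1) = P * t + l 0 + 1 := by rw [hP]; ring
      omega
    -- cancel P from the divisibility
    have hdvd2 : (Ft + 1) ∣ (t + 1 + G) := by
      have h : l' 0 + P * G + 1 = P * (t + 1 + G) := by rw [hl'0]; ring
      rw [hF1, h] at h3
      exact (mul_dvd_mul_iff_left (show P ≠ 0 by omega)).mp h3
    -- digit sums split
    have hsum : l' 0 + ∑ i ∈ range N, l' (i + 1) ≤ l 0 + ∑ i ∈ range N, l (i + 1) := by
      rw [Finset.sum_range_succ', Finset.sum_range_succ'] at h2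
      omega
    rcases N with _ | M
    · -- base: only index 0
      simp only [Finset.sum_range_zero] at hsum
      have ht : t = 0 := by
        rcases Nat.eq_zero_or_pos t with h | h
        · exact h
        · have : P ≤ P * t := Nat.le_mul_of_pos_right P h
          omega
      intro i hi
      have : i = 0 := by omega
      subst this
      omega
    · -- inductive step
      set N' := M + 1 with hN'
      set m : ℕ → ℕ := fun i => if i = 0 then l' 1 + t else l' (i + 1) with hm
      have hterm : ∀ i, m i * ∏ j ∈ range i, (l (j + 1) + 1)
          = l' (i + 1) * ∏ j ∈ range i, (l (j + 1) + 1) + (if i = 0 then t else 0) := by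
        intro i
        by_cases h : i = 0
        · subst h; simp [hm]
        · simp [hm, h]
      have hmsum : ∑ i ∈ range N', m i * ∏ j ∈ range i, (l (j + 1) + 1) = G + t := by
        rw [hG]
        calc ∑ i ∈ range N', m i * ∏ j ∈ range i, (l (j + 1) + 1)
            = ∑ i ∈ range N', (l' (i + 1) * ∏ j ∈ range i, (l (j + 1) + 1)
                + (if i = 0 then t else 0)) := Finset.sum_congr rfl fun i _ => hterm i
          _ = (∑ i ∈ range N', l' (i + 1) * ∏ j ∈ range i, (l (j + 1) + 1))
                + ∑ i ∈ range N', (if i = 0 then t else 0) := Finset.sum_add_distrib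
          _ = _ := by
                rw [Finset.sum_ite_eq' (range N') 0 (fun _ => t),
                  if_pos (Finset.mem_range.mpr (by omega))]
      have hmdigit : ∑ i ∈ range N', m i = t + ∑ i ∈ range N', l' (i + 1) := by
        have : ∀ i, m i = l' (i + 1) + (if i = 0 then t else 0) := by
          intro i; by_cases h : i = 0
          · subst h; simp [hm]
          · simp [hm, h]
        rw [Finset.sum_congr rfl fun i _ => this i, Finset.sum_add_distrib,
          Finset.sum_ite_eq' (range N') 0 (fun _ => t),
          if_pos (Finset.mem_range.mpr (by omega))]
        omega
      -- apply IH
      have hle : ∑ i ∈ range N', m i ≤ ∑ i ∈ range N', l (i + 1) := by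
        have ht' : t ≤ P * t := Nat.le_mul_of_pos_left t (by omega)
        omega
      have ihres : ∀ i < N', l (i + 1) = m i := by
        refine ih (fun i => l (i + 1)) m (fun i hi => h1 (i + 1) (by omega)) hle ?_
        rw [hmsum]
        have h : G + t + 1 = t + 1 + G := by ring
        rw [h]
        exact hdvd2
      -- extract t = 0
      have hsum_eq : ∑ i ∈ range N', m i = ∑ i ∈ range N', l (i + 1) :=
        (Finset.sum_congr rfl fun i hi => (ihres i (Finset.mem_range.mp hi)).symm)
      have ht : t = 0 := by
        have hPt : P * t = l 0 * t + t := by rw [hP]; ring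
        have hl0 : 0 < l 0 := h1 0 (by omega)
        have : l 0 * t = 0 := by omega
        rcases Nat.mul_eq_zero.mp this with h | h
        · omega
        · exact h
      subst ht
      have hl'0' : l' 0 = l 0 := by omega
      intro i hi
      rcases i with _ | k
      · exact hl'0'.symm
      · have hk : k < N' := by omega
        have := ihres k hk
        by_cases h : k = 0
        · subst h; simpa [hm] using this
        · simpa [hm, h] using this

/-- Theorem 2 of the paper: uniqueness of the target frequency modulo
`f + 1`, where `f = ∑ i, l i * Q i` and `Q i = ∏_{j<i} (l j + 1)`. -/
theorem mixed_radix_unique_mod (N : ℕ) (l l' : Fin N → ℕ)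
    (h1 : ∀ i, 0 < l i)
    (h2 : ∑ i, l' i ≤ ∑ i, l i)
    (h3 : ∑ i, l i * ∏ j ∈ Finset.Iio i, (l j + 1)
        ≡ ∑ i, l' i * ∏ j ∈ Finset.Iio i, (l j + 1)
        [MOD (∑ i, l i * ∏ j ∈ Finset.Iio i, (l j + 1)) + 1]) :
    ∀ i, l i = l' i := by
  classical
  set L : ℕ → ℕ := fun j => if h : j < N then l ⟨j, h⟩ else 1 with hL
  set L' : ℕ → ℕ := fun j => if h : j < N then l' ⟨j, h⟩ else 0 with hL'
  have hLval : ∀ i : Fin N, L i.val = l i := by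
    intro i; simp [hL, i.isLt]
  have hL'val : ∀ i : Fin N, L' i.val = l' i := by
    intro i; simp [hL', i.isLt]
  have hprod : ∀ i : Fin N, ∏ j ∈ Finset.Iio i, (l j + 1)
      = ∏ j ∈ range i.val, (L j + 1) := by
    intro i
    rw [← Nat.Iio_eq_range, ← Fin.map_valEmbedding_Iio, Finset.prod_map]
    exact Finset.prod_congr rfl fun j _ => by simp [hLval j]
  have hFsum : ∑ i, l i * ∏ j ∈ Finset.Iio i, (l j + 1)
      = ∑ i ∈ range N, L i * ∏ j ∈ range i, (L j + 1) := by
    rw [← Fin.sum_univ_eq_sum_range (fun i => L i * ∏ j ∈ range i, (L j + 1)) N]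
    exact Finset.sum_congr rfl fun i _ => by rw [hprod i, hLval i]
  have hF'sum : ∑ i, l' i * ∏ j ∈ Finset.Iio i, (l j + 1)
      = ∑ i ∈ range N, L' i * ∏ j ∈ range i, (L j + 1) := by
    rw [← Fin.sum_univ_eq_sum_range (fun i => L' i * ∏ j ∈ range i, (L j + 1)) N]
    exact Finset.sum_congr rfl fun i _ => by rw [hprod i, hL'val i]
  have hsums : ∑ i ∈ range N, L' i ≤ ∑ i ∈ range N, L i := by
    rw [← Fin.sum_univ_eq_sum_range L N, ← Fin.sum_univ_eq_sum_range L' N]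
    calc ∑ i : Fin N, L' i.val = ∑ i, l' i := Finset.sum_congr rfl fun i _ => hL'val i
      _ ≤ ∑ i, l i := h2
      _ = ∑ i : Fin N, L i.val := (Finset.sum_congr rfl fun i _ => hLval i).symm
  -- convert ModEq to divisibility
  set F := ∑ i ∈ range N, L i * ∏ j ∈ range i, (L j + 1) with hF
  set F' := ∑ i ∈ range N, L' i * ∏ j ∈ range i, (L j + 1) with hF'
  have h3' : F ≡ F' [MOD F + 1] := by rw [← hFsum, ← hF'sum]; exact h3
  have hdvd : F + 1 ∣ F' + 1 := by
    have h1' : F' + 1 ≡ F + 1 [MOD F + 1] := h3'.symm.add_right 1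
    have h2' : F + 1 ≡ 0 [MOD F + 1] := Nat.modEq_zero_iff_dvd.mpr dvd_rfl
    exact Nat.modEq_zero_iff_dvd.mp (h1'.trans h2')
  have hres : ∀ i < N, L i = L' i := by
    refine mr_aux N L L' (fun i hi => ?_) hsums hdvd
    · simp only [hL]
      rw [dif_pos hi]
      exact h1 _
  intro i
  have := hres i.val i.isLt
  rw [hLval i, hL'val i] at this
  exact this
end

section
/- Let N be a natural number and let l_1, ..., l_N, l'_1, ..., l'_N be integers satisfying: (1) l_i > 0 and l'_i ≥ 0 for all i; (2) ∑_{i=1}^N l_i ≥ ∑_{i=1}^N l'_i; and (3) ∑_{i=1}^N l_i Q_i = ∑_{i=1}^N l'_i Q_i, where Q_1 = 1 and Q_i = ∏_{j=1}^{i-1} (l_j + 1) for i ≥ 2. Then there exist nonnegative integers k_0, k_1, ..., k_N with k_0 = 0 and k_N = 0 such that for every m with 1 ≤ m ≤ N one has l'_m + k_{m-1} = l_m + k_m (l_m + 1). -/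
private lemma mrc_prod_Iio (N : ℕ) (i : Fin N) (f : ℕ → ℕ) :
    ∏ j ∈ Finset.Iio i, f j.val = ∏ j ∈ Finset.range i.val, f j := by
  rw [Finset.range_eq_Ico, Nat.Ico_zero_eq_range, ← Nat.Iio_eq_range,
    ← Fin.map_valEmbedding_Iio, Finset.prod_map]
  rfl

/-- Lemma 1 from the appendix of the paper: existence of carries
`k_0, ..., k_N` with `k_0 = k_N = 0` such that
`l'_m + k_{m-1} = l_m + k_m * (l_m + 1)` for all `m`. -/
theorem mixed_radix_carries (N : ℕ) (l l' : Fin N → ℕ)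
    (h1 : ∀ i, 0 < l i)
    (h2 : ∑ i, l' i ≤ ∑ i, l i)
    (h3 : ∑ i, l i * ∏ j ∈ Finset.Iio i, (l j + 1)
        = ∑ i, l' i * ∏ j ∈ Finset.Iio i, (l j + 1)) :
    ∃ k : Fin (N + 1) → ℕ, k 0 = 0 ∧ k (Fin.last N) = 0 ∧
      ∀ m : Fin N, l' m + k m.castSucc = l m + k m.succ * (l m + 1) := by
  classical
  set L : ℕ → ℕ := fun i => if h : i < N then l ⟨i, h⟩ else 1 with hLdef
  set L' : ℕ → ℕ := fun i => if h : i < N then l' ⟨i, h⟩ else 0 with hL'def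
  set q : ℕ → ℕ := fun m => ∏ j ∈ Finset.range m, (L j + 1) with hqdef
  set A : ℕ → ℕ := fun m => ∑ i ∈ Finset.range m, L i * q i with hAdef
  set B : ℕ → ℕ := fun m => ∑ i ∈ Finset.range m, L' i * q i with hBdef
  have hLval : ∀ i : Fin N, L i.val = l i := fun i => by
    simp [hLdef, i.isLt]
  have hL'val : ∀ i : Fin N, L' i.val = l' i := fun i => by
    simp [hL'def, i.isLt]
  have qpos : ∀ m, 0 < q m := fun m => Finset.prod_pos fun j _ => Nat.succ_pos _
  have qsucc : ∀ m, q (m + 1) = q m * (L m + 1) := fun m => by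
    simp [hqdef, Finset.prod_range_succ]
  have Aq : ∀ m, A m + 1 = q m := by
    intro m
    induction m with
    | zero => simp [hAdef, hqdef]
    | succ n ih =>
      have : A (n + 1) = A n + L n * q n := by simp [hAdef, Finset.sum_range_succ]
      rw [this, qsucc n]
      nlinarith [ih]
  have Asucc : ∀ m, A (m + 1) = A m + L m * q m := fun m => by
    simp [hAdef, Finset.sum_range_succ]
  have Bsucc : ∀ m, B (m + 1) = B m + L' m * q m := fun m => by
    simp [hBdef, Finset.sum_range_succ]
  have qdvd : ∀ m i, m ≤ i → q m ∣ q i := by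
    intro m i h
    exact Finset.prod_dvd_prod_of_subset _ _ _ (Finset.range_subset_range.2 h)
  have hqfin : ∀ i : Fin N, (∏ j ∈ Finset.Iio i, (l j + 1)) = q i.val := by
    intro i
    show _ = ∏ j ∈ Finset.range i.val, (L j + 1)
    rw [← mrc_prod_Iio N i (fun j => L j + 1)]
    refine Finset.prod_congr rfl fun j hj => ?_
    rw [hLval j]
  have hAB : A N = B N := by
    have hA : A N = ∑ i : Fin N, l i * ∏ j ∈ Finset.Iio i, (l j + 1) := by
      show ∑ i ∈ Finset.range N, L i * q i = _
      rw [← Fin.sum_univ_eq_sum_range (fun i => L i * q i) N]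
      refine Finset.sum_congr rfl fun i _ => ?_
      rw [hLval i, hqfin i]
    have hB : B N = ∑ i : Fin N, l' i * ∏ j ∈ Finset.Iio i, (l j + 1) := by
      show ∑ i ∈ Finset.range N, L' i * q i = _
      rw [← Fin.sum_univ_eq_sum_range (fun i => L' i * q i) N]
      refine Finset.sum_congr rfl fun i _ => ?_
      rw [hL'val i, hqfin i]
    rw [hA, hB, h3]
  -- tail sums
  have tail : ∀ m ≤ N, A m ≤ B m ∧ q m ∣ (B m - A m) := by
    intro m hm
    have hA' : A N = A m + ∑ i ∈ Finset.Ico m N, L i * q i := by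
      show ∑ i ∈ Finset.range N, L i * q i
        = (∑ i ∈ Finset.range m, L i * q i) + _
      rw [Finset.range_eq_Ico, ← Finset.sum_Ico_consecutive _ (Nat.zero_le m) hm,
        ← Finset.range_eq_Ico]
    have hB' : B N = B m + ∑ i ∈ Finset.Ico m N, L' i * q i := by
      show ∑ i ∈ Finset.range N, L' i * q i
        = (∑ i ∈ Finset.range m, L' i * q i) + _
      rw [Finset.range_eq_Ico, ← Finset.sum_Ico_consecutive _ (Nat.zero_le m) hm,
        ← Finset.range_eq_Ico]
    set SA := ∑ i ∈ Finset.Ico m N, L i * q i with hSA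
    set SB := ∑ i ∈ Finset.Ico m N, L' i * q i with hSB
    have hdSA : q m ∣ SA :=
      Finset.dvd_sum fun i hi => Dvd.dvd.mul_left (qdvd m i (Finset.mem_Ico.1 hi).1) _
    have hdSB : q m ∣ SB :=
      Finset.dvd_sum fun i hi => Dvd.dvd.mul_left (qdvd m i (Finset.mem_Ico.1 hi).1) _
    have heq : A m + SA = B m + SB := by rw [← hA', ← hB', hAB]
    rcases le_or_gt SB SA with h | h
    · have h1 : A m ≤ B m := by omega
      have h2 : B m - A m = SA - SB := by omega
      exact ⟨h1, h2 ▸ Nat.dvd_sub hdSA hdSB⟩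
    · exfalso
      have hd : q m ∣ (SB - SA) := Nat.dvd_sub hdSB hdSA
      have hpos : 0 < SB - SA := by omega
      have := Nat.le_of_dvd hpos hd
      have := Aq m
      omega
  set k : Fin (N + 1) → ℕ := fun m => (B m.val - A m.val) / q m.val with hkdef
  have hk : ∀ m ≤ N, B m = A m + q m * ((B m - A m) / q m) := by
    intro m hm
    obtain ⟨hle, hdvd⟩ := tail m hm
    rw [Nat.mul_div_cancel' hdvd]
    omega
  refine ⟨k, ?_, ?_, ?_⟩
  · simp [hkdef, hAdef, hBdef]
  · simp [hkdef, Fin.val_last, hAB]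
  · intro m
    have hv : m.val < N := m.isLt
    have e1 := hk m.val (le_of_lt hv)
    have e2 := hk (m.val + 1) hv
    have e3 := Asucc m.val
    have e4 := Bsucc m.val
    have e5 := qsucc m.val
    have hcast : (m.castSucc).val = m.val := rfl
    have hsucc : (m.succ).val = m.val + 1 := rfl
    set x := (B m.val - A m.val) / q m.val with hx
    set y := (B (m.val + 1) - A (m.val + 1)) / q (m.val + 1) with hy
    have hk1 : k m.castSucc = x := rfl
    have hk2 : k m.succ = y := rfl
    rw [hk1, hk2, ← hLval m, ← hL'val m]
    -- main identity
    have main : q m.val * (L' m.val + x) = q m.val * (L m.val + y * (L m.val + 1)) := by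
      have : A m.val + L m.val * q m.val + q m.val * (L m.val + 1) * y
          = A m.val + q m.val * x + L' m.val * q m.val := by
        rw [← e5, ← e3]
        omega
      zify at this ⊢
      linear_combination -this
    exact Nat.eq_of_mul_eq_mul_left (qpos m.val) main
end

section
/- Let N be a natural number and let l_1, ..., l_N be nonnegative integers (some possibly zero). Define Q_i = ∏_{j=1}^{i-1} (l_j + 1) if l_i > 0 and Q_i = 0 if l_i = 0 (with the empty product equal to 1, so Q_1 = 1 when l_1 > 0). Let l'_1, ..., l'_N be nonnegative integers with ∑_{i=1}^N l'_i = ∑_{i=1}^N l_i. If ∑_{i=1}^N l'_i Q_i = ∑_{i=1}^N l_i Q_i, then l'_i = l_i for all i. -/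
open Finset

private def Qw (l : ℕ → ℕ) (i : ℕ) : ℕ :=
  if l i = 0 then 0 else ∏ j ∈ Finset.range i, (l j + 1)

private lemma telescope (l : ℕ → ℕ) (n : ℕ) :
    (∑ i ∈ range n, l i * Qw l i) + 1 = ∏ j ∈ range n, (l j + 1) := by
  induction n with
  | zero => simp
  | succ n ih =>
      rw [Finset.sum_range_succ, Finset.prod_range_succ]
      have h : l n * Qw l n = l n * ∏ j ∈ range n, (l j + 1) := by
        unfold Qw; by_cases h : l n = 0 <;> simp [h]
      rw [h, ← ih]; ring

private lemma lemma1 (l a : ℕ → ℕ) : ∀ n t : ℕ,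
    (∑ i ∈ range n, a i * Qw l i) + 1 = (t + 1) * ∏ j ∈ range n, (l j + 1) →
    ∑ i ∈ range n, l i + 2 * t ≤ ∑ i ∈ range n, a i := by
  intro n
  induction n with
  | zero => intro t h; simp at h ⊢; omega
  | succ n ih =>
      intro t h
      rw [Finset.sum_range_succ, Finset.prod_range_succ] at h
      set P := ∏ j ∈ range n, (l j + 1) with hP
      by_cases hl : l n = 0
      · have hq : Qw l n = 0 := by unfold Qw; simp [hl]
        rw [hq, mul_zero, add_zero, hl] at h
        have e : (t + 1) * (P * (0 + 1)) = (t + 1) * P := by ring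
        rw [e] at h
        have := ih t h
        rw [Finset.sum_range_succ, Finset.sum_range_succ, hl]
        omega
      · have hq : Qw l n = P := by unfold Qw; simp [hl, hP]
        have hPpos : 0 < P := Finset.prod_pos (fun j _ => Nat.succ_pos _)
        rw [hq] at h
        -- a n < (t+1)*(l n + 1)
        have han : a n < (t + 1) * (l n + 1) := by
          by_contra hc
          push_neg at hc
          have h2 : (t + 1) * (l n + 1) * P ≤ a n * P := Nat.mul_le_mul_right P hc
          have hS : 0 ≤ ∑ i ∈ range n, a i * Qw l i := Nat.zero_le _
          nlinarith
        obtain ⟨s, hs⟩ : ∃ s, a n + 1 + s = (t + 1) * (l n + 1) := by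
          refine ⟨(t + 1) * (l n + 1) - (a n + 1), by omega⟩
        have h2 : (s + 1) * P + a n * P = (t + 1) * (P * (l n + 1)) := by
          calc (s + 1) * P + a n * P = (a n + 1 + s) * P := by ring
            _ = ((t + 1) * (l n + 1)) * P := by rw [hs]
            _ = (t + 1) * (P * (l n + 1)) := by ring
        have hkey : (∑ i ∈ range n, a i * Qw l i) + 1 = (s + 1) * P := by linarith
        have hih := ih s hkey
        rw [Finset.sum_range_succ, Finset.sum_range_succ]
        have hln : 1 ≤ l n := Nat.one_le_iff_ne_zero.mpr hl
        have : a n + s = t * l n + t + l n := by nlinarith [hs]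
        nlinarith [Nat.mul_le_mul_left t hln]

private lemma lemma2 (l a : ℕ → ℕ) : ∀ n : ℕ,
    (∑ i ∈ range n, a i * Qw l i) + 1 = ∏ j ∈ range n, (l j + 1) →
    (∑ i ∈ range n, a i ≤ ∑ i ∈ range n, l i) →
    ∀ i < n, a i = l i := by
  intro n
  induction n with
  | zero => intro _ _ i hi; omega
  | succ n ih =>
      intro h hb i hi
      rw [Finset.sum_range_succ, Finset.prod_range_succ] at h
      rw [Finset.sum_range_succ, Finset.sum_range_succ] at hb
      by_cases hl : l n = 0
      · have hq : Qw l n = 0 := by unfold Qw; simp [hl]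
        rw [hq, mul_zero, add_zero] at h
        have h1 := lemma1 l a n 0 (by rw [hl] at h; simpa using h)
        simp at h1
        have han : a n = 0 := by omega
        have := ih (by rw [hl] at h; simpa using h) (by omega)
        rcases Nat.lt_succ_iff_lt_or_eq.mp hi with h' | h'
        · exact this i h'
        · rw [h', han, hl]
      · have hq : Qw l n = ∏ j ∈ range n, (l j + 1) := by unfold Qw; simp [hl]
        set P := ∏ j ∈ range n, (l j + 1) with hP
        have hPpos : 0 < P := Finset.prod_pos (fun j _ => Nat.succ_pos _)
        rw [hq] at h
        have han : a n < l n + 1 := by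
          by_contra hc
          push_neg at hc
          have h2 : (l n + 1) * P ≤ a n * P := Nat.mul_le_mul_right P hc
          have hS : 0 ≤ ∑ i ∈ range n, a i * Qw l i := Nat.zero_le _
          nlinarith
        obtain ⟨s, hs⟩ : ∃ s, a n + 1 + s = l n + 1 := ⟨l n + 1 - (a n + 1), by omega⟩
        have h2 : (s + 1) * P + a n * P = P * (l n + 1) := by
          calc (s + 1) * P + a n * P = (a n + 1 + s) * P := by ring
            _ = (l n + 1) * P := by rw [hs]
            _ = P * (l n + 1) := by ring
        have hkey : (∑ i ∈ range n, a i * Qw l i) + 1 = (s + 1) * P := by linarith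
        have h1 := lemma1 l a n s hkey
        have hs0 : s = 0 := by omega
        subst hs0
        have han' : a n = l n := by omega
        have := ih (by simpa using hkey) (by omega)
        rcases Nat.lt_succ_iff_lt_or_eq.mp hi with h' | h'
        · exact this i h'
        · rw [h', han']

/-- Correctness of the second method of choosing the frequencies
(equation (5) of the paper), allowing empty output channels:
`Q i = ∏_{j<i} (l j + 1)` if `l i > 0`, and `Q i = 0` if `l i = 0`. -/
theorem second_method_unique (N : ℕ) (l l' : Fin N → ℕ)
    (hsum : ∑ i, l' i = ∑ i, l i)
    (hfreq : ∑ i, l' i * (if l i = 0 then 0 else ∏ j ∈ Finset.Iio i, (l j + 1))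
           = ∑ i, l i * (if l i = 0 then 0 else ∏ j ∈ Finset.Iio i, (l j + 1))) :
    ∀ i, l' i = l i := by
  classical
  set L : ℕ → ℕ := fun j => if h : j < N then l ⟨j, h⟩ else 0 with hL
  set A : ℕ → ℕ := fun j => if h : j < N then l' ⟨j, h⟩ else 0 with hA
  have hLv : ∀ i : Fin N, L i.val = l i := by
    intro i; simp [hL, i.isLt]
  have hAv : ∀ i : Fin N, A i.val = l' i := by
    intro i; simp [hA, i.isLt]
  have hprod : ∀ i : Fin N, (∏ j ∈ Finset.Iio i, (l j + 1)) = ∏ j ∈ range i.val, (L j + 1) := by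
    intro i
    rw [← Nat.Iio_eq_range, ← Fin.map_valEmbedding_Iio, Finset.prod_map]
    exact Finset.prod_congr rfl (fun j _ => by simp [hLv j])
  have hQ : ∀ i : Fin N, (if l i = 0 then 0 else ∏ j ∈ Finset.Iio i, (l j + 1)) = Qw L i.val := by
    intro i
    unfold Qw
    rw [hLv, hprod]
  -- convert sums
  have hsum' : ∑ i ∈ range N, A i = ∑ i ∈ range N, L i := by
    rw [← Fin.sum_univ_eq_sum_range, ← Fin.sum_univ_eq_sum_range]
    calc ∑ i : Fin N, A i.val = ∑ i : Fin N, l' i := Finset.sum_congr rfl (fun i _ => hAv i)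
      _ = ∑ i : Fin N, l i := hsum
      _ = ∑ i : Fin N, L i.val := Finset.sum_congr rfl (fun i _ => (hLv i).symm)
  have hfreq' : ∑ i ∈ range N, A i * Qw L i = ∑ i ∈ range N, L i * Qw L i := by
    rw [← Fin.sum_univ_eq_sum_range, ← Fin.sum_univ_eq_sum_range]
    calc ∑ i : Fin N, A i.val * Qw L i.val
        = ∑ i : Fin N, l' i * (if l i = 0 then 0 else ∏ j ∈ Finset.Iio i, (l j + 1)) :=
          Finset.sum_congr rfl (fun i _ => by rw [hAv, hQ])
      _ = ∑ i : Fin N, l i * (if l i = 0 then 0 else ∏ j ∈ Finset.Iio i, (l j + 1)) := hfreq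
      _ = ∑ i : Fin N, L i.val * Qw L i.val :=
          Finset.sum_congr rfl (fun i _ => by rw [hLv, hQ])
  have htel := telescope L N
  have hkey : (∑ i ∈ range N, A i * Qw L i) + 1 = ∏ j ∈ range N, (L j + 1) := by
    rw [hfreq']; exact htel
  have := lemma2 L A N hkey (le_of_eq hsum')
  intro i
  have := this i.val i.isLt
  rw [hAv, hLv] at this
  exact this
end

section
/- Let N be a natural number and let l_1, ..., l_N be nonnegative integers (some possibly zero). Define Q_i = ∏_{j=1}^{i-1} (l_j + 1) if l_i > 0 and Q_i = 0 if l_i = 0 (with the empty product equal to 1, so Q_1 = 1 when l_1 > 0), and set f = ∑_{i=1}^N l_i Q_i. Let l'_1, ..., l'_N be nonnegative integers with ∑_{i=1}^N l'_i = ∑_{i=1}^N l_i. If ∑_{i=1}^N l'_i Q_i ≡ f (mod f + 1), then l'_i = l_i for all i. -/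
open Finset

private def Qif (l : ℕ → ℕ) (i : ℕ) : ℕ :=
  if l i = 0 then 0 else ∏ j ∈ range i, (l j + 1)

private lemma prod_pos' (l : ℕ → ℕ) (n : ℕ) : 0 < ∏ j ∈ range n, (l j + 1) :=
  Finset.prod_pos (fun _ _ => Nat.succ_pos _)

/-- telescoping: `∑ l i * Qif = ∏ (l i + 1) - 1` -/
private lemma sum_lQ (l : ℕ → ℕ) (n : ℕ) :
    ∑ i ∈ range n, l i * Qif l i = (∏ j ∈ range n, (l j + 1)) - 1 := by
  induction n with
  | zero => simp
  | succ n ih =>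
    rw [Finset.sum_range_succ, Finset.prod_range_succ, ih]
    have hP := prod_pos' l n
    set x := ∏ j ∈ range n, (l j + 1) with hx
    have hq : l n * Qif l n = l n * x := by
      unfold Qif
      rcases Nat.eq_zero_or_pos (l n) with h | h
      · simp [h]
      · rw [if_neg (by omega)]
    rw [hq]
    have : x * (l n + 1) = l n * x + x := by ring
    omega

/-- Key lemma, by induction peeling off the first index. -/
private lemma key : ∀ (n : ℕ) (l a : ℕ → ℕ) (m : ℕ),
    (m + ∑ i ∈ range n, a i * Qif l i) ≡
      ((∏ j ∈ range n, (l j + 1)) - 1) [MOD (∏ j ∈ range n, (l j + 1))] →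
    (∑ i ∈ range n, l i ≤ m + ∑ i ∈ range n, a i) ∧
      (m + ∑ i ∈ range n, a i = ∑ i ∈ range n, l i → ∀ i < n, a i ≤ l i) := by
  intro n
  induction n with
  | zero => intro l a m _; simp
  | succ n ih =>
    intro l a m h
    set l' : ℕ → ℕ := fun i => l (i + 1) with hl'
    set a' : ℕ → ℕ := fun i => a (i + 1) with ha'
    set r : ℕ := l 0 + 1 with hr
    set P' : ℕ := ∏ j ∈ range n, (l' j + 1) with hP'
    have hP'pos : 0 < P' := prod_pos' l' n
    -- rewrite big product
    have hProd : ∏ j ∈ range (n + 1), (l j + 1) = r * P' := by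
      rw [Finset.prod_range_succ']; ring
    have hrP : r ≤ r * P' := Nat.le_mul_of_pos_right r hP'pos
    have hmulpred : r * (P' - 1) + r = r * P' := by
      have hpp : P' - 1 + 1 = P' := by omega
      calc r * (P' - 1) + r = r * (P' - 1 + 1) := by ring
        _ = r * P' := by rw [hpp]
    have e2 : r * P' - 1 = l 0 + r * (P' - 1) := by omega
    -- rewrite weighted sum
    have hterm : ∀ i, a (i + 1) * Qif l (i + 1) = r * (a' i * Qif l' i) := by
      intro i
      have hq : Qif l (i + 1) = r * Qif l' i := by
        unfold Qif
        rcases Nat.eq_zero_or_pos (l (i + 1)) with h0 | h0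
        · simp [h0, hl']
        · rw [if_neg (by omega), if_neg (by simp only [hl']; omega),
            Finset.prod_range_succ']
          ring
      rw [hq]; ring
    have hW : ∑ i ∈ range (n + 1), a i * Qif l i
        = a 0 * Qif l 0 + r * ∑ i ∈ range n, a' i * Qif l' i := by
      rw [Finset.sum_range_succ', Finset.sum_congr rfl (fun i _ => hterm i),
        ← Finset.mul_sum]
      ring
    have hSl : ∑ i ∈ range (n + 1), l i = l 0 + ∑ i ∈ range n, l' i := by
      rw [Finset.sum_range_succ']; ring
    have hSa : ∑ i ∈ range (n + 1), a i = a 0 + ∑ i ∈ range n, a' i := by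
      rw [Finset.sum_range_succ']; ring
    set W' : ℕ := ∑ i ∈ range n, a' i * Qif l' i with hW'
    rcases Nat.eq_zero_or_pos (l 0) with h0 | h0
    · -- empty channel: Qif l 0 = 0, r = 1
      have hq0 : Qif l 0 = 0 := by unfold Qif; simp [h0]
      have hr1 : r = 1 := by omega
      have hcond : (m + W') ≡ (P' - 1) [MOD P'] := by
        have := h
        rw [hProd, hW, hq0, hr1] at this
        simpa using this
      obtain ⟨ihle, iheq⟩ := ih l' a' m hcond
      constructor
      · rw [hSl, hSa]; omega
      · intro heq i hi
        rw [hSl, hSa] at heq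
        have ha0 : a 0 = 0 ∧ m + ∑ i ∈ range n, a' i = ∑ i ∈ range n, l' i := by
          omega
        rcases i with _ | i
        · omega
        · exact iheq ha0.2 i (by omega)
    · -- nonempty channel: Qif l 0 = 1
      have hq0 : Qif l 0 = 1 := by unfold Qif; rw [if_neg (by omega)]; simp
      have hcond : (m + a 0 + r * W') ≡ (r * P' - 1) [MOD r * P'] := by
        have := h
        rw [hProd, hW, hq0] at this
        simpa [Nat.add_assoc, Nat.mul_one] using this
      -- reduce mod r
      have hmod_r : (m + a 0) ≡ l 0 [MOD r] := by
        have h1 : (m + a 0 + r * W') ≡ (r * P' - 1) [MOD r] :=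
          hcond.of_mul_right P'
        have h3 : (m + a 0 + r * W') ≡ (m + a 0) [MOD r] :=
          ((Nat.modEq_iff_dvd' (Nat.le_add_right _ _)).2
            ⟨W', by simp⟩).symm
        have h4 : (l 0 + r * (P' - 1)) ≡ l 0 [MOD r] :=
          ((Nat.modEq_iff_dvd' (Nat.le_add_right _ _)).2
            ⟨P' - 1, by simp⟩).symm
        calc (m + a 0) ≡ (m + a 0 + r * W') [MOD r] := h3.symm
          _ ≡ (r * P' - 1) [MOD r] := h1
          _ = l 0 + r * (P' - 1) := e2
          _ ≡ l 0 [MOD r] := h4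
      have hlt : l 0 < r := by omega
      have hdig : (m + a 0) % r = l 0 := by
        have := hmod_r
        unfold Nat.ModEq at this
        rwa [Nat.mod_eq_of_lt hlt] at this
      set k : ℕ := (m + a 0) / r with hk
      have hdecomp : m + a 0 = l 0 + r * k := by
        have hdm := Nat.div_add_mod (m + a 0) r
        rw [← hk] at hdm
        omega
      -- cancel to deduce condition mod P'
      have hcond' : (k + W') ≡ (P' - 1) [MOD P'] := by
        have e1 : m + a 0 + r * W' = l 0 + r * (k + W') := by
          rw [hdecomp]; ring
        have h1 : (l 0 + r * (k + W')) ≡ (l 0 + r * (P' - 1)) [MOD r * P'] := by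
          rw [← e1, ← e2]; exact hcond
        have h2 : (r * (k + W')) ≡ (r * (P' - 1)) [MOD r * P'] :=
          Nat.ModEq.add_left_cancel' (l 0) h1
        exact Nat.ModEq.mul_left_cancel' (by omega) h2
      obtain ⟨ihle, iheq⟩ := ih l' a' k hcond'
      have hkr : k ≤ r * k := Nat.le_mul_of_pos_left k (by omega)
      constructor
      · rw [hSl, hSa]; omega
      · intro heq i hi
        rw [hSl, hSa] at heq
        -- l 0 + r k + Σa' = l 0 + Σl' hence r k + Σa' = Σl'
        have hrk : r * k + ∑ i ∈ range n, a' i = ∑ i ∈ range n, l' i := by omega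
        have htight : k + ∑ i ∈ range n, a' i = ∑ i ∈ range n, l' i ∧ r * k = k := by
          omega
        have hk0 : k = 0 := by
          rcases Nat.eq_zero_or_pos k with h | h
          · exact h
          · have : r * k ≥ 2 * k := Nat.mul_le_mul_right k (by omega)
            omega
        rcases i with _ | i
        · omega
        · exact iheq htight.1 i (by omega)

/-- Correctness of the sampling frequency `f_s = f + 1` combined with the
second method of choosing the frequencies (equation (5) of the paper),
allowing empty output channels: no other output state with the same total
photon number has a frequency congruent to the target frequency `f`
modulo `f + 1`. -/
theorem second_method_unique_mod (N : ℕ) (l l' : Fin N → ℕ)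
    (hsum : ∑ i, l' i = ∑ i, l i)
    (hfreq : ∑ i, l' i * (if l i = 0 then 0 else ∏ j ∈ Finset.Iio i, (l j + 1))
           ≡ ∑ i, l i * (if l i = 0 then 0 else ∏ j ∈ Finset.Iio i, (l j + 1))
           [MOD (∑ i, l i * (if l i = 0 then 0 else ∏ j ∈ Finset.Iio i, (l j + 1))) + 1]) :
    ∀ i, l' i = l i := by
  classical
  set L : ℕ → ℕ := fun j => if h : j < N then l ⟨j, h⟩ else 0 with hL
  set A : ℕ → ℕ := fun j => if h : j < N then l' ⟨j, h⟩ else 0 with hA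
  have hLval : ∀ i : Fin N, L ↑i = l i := fun i => dif_pos i.2
  have hAval : ∀ i : Fin N, A ↑i = l' i := fun i => dif_pos i.2
  have hQ : ∀ i : Fin N,
      (if l i = 0 then 0 else ∏ j ∈ Finset.Iio i, (l j + 1)) = Qif L ↑i := by
    intro i
    unfold Qif
    rw [hLval]
    congr 1
    have : ∏ j ∈ range (i : ℕ), (L j + 1)
        = ∏ j ∈ (Finset.Iio i).map Fin.valEmbedding, (L j + 1) := by
      rw [Fin.map_valEmbedding_Iio, Nat.Iio_eq_range]
    rw [this, Finset.prod_map]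
    exact (Finset.prod_congr rfl fun j _ => by rw [Fin.valEmbedding_apply, hLval]).symm
  have hWl : ∑ i, l i * (if l i = 0 then 0 else ∏ j ∈ Finset.Iio i, (l j + 1))
      = ∑ i ∈ range N, L i * Qif L i := by
    rw [← Fin.sum_univ_eq_sum_range (fun i => L i * Qif L i) N]
    exact Finset.sum_congr rfl fun i _ => by rw [hQ, hLval]
  have hWl' : ∑ i, l' i * (if l i = 0 then 0 else ∏ j ∈ Finset.Iio i, (l j + 1))
      = ∑ i ∈ range N, A i * Qif L i := by
    rw [← Fin.sum_univ_eq_sum_range (fun i => A i * Qif L i) N]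
    exact Finset.sum_congr rfl fun i _ => by rw [hQ, hAval]
  have hSl : ∑ i, l i = ∑ i ∈ range N, L i := by
    rw [← Fin.sum_univ_eq_sum_range L N]
    exact Finset.sum_congr rfl fun i _ => (hLval i).symm
  have hSa : ∑ i, l' i = ∑ i ∈ range N, A i := by
    rw [← Fin.sum_univ_eq_sum_range A N]
    exact Finset.sum_congr rfl fun i _ => (hAval i).symm
  have hPpos := prod_pos' L N
  have hf : ∑ i ∈ range N, L i * Qif L i = (∏ j ∈ range N, (L j + 1)) - 1 :=
    sum_lQ L N
  have hfreq' : (0 + ∑ i ∈ range N, A i * Qif L i) ≡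
      ((∏ j ∈ range N, (L j + 1)) - 1) [MOD (∏ j ∈ range N, (L j + 1))] := by
    rw [Nat.zero_add, ← hf, ← hWl, ← hWl']
    have : (∑ i, l i * (if l i = 0 then 0 else ∏ j ∈ Finset.Iio i, (l j + 1))) + 1
        = ∏ j ∈ range N, (L j + 1) := by rw [hWl, hf]; omega
    rw [← this]
    exact hfreq
  obtain ⟨_, heq⟩ := key N L A 0 hfreq'
  have hALeq : ∀ i < N, A i ≤ L i := heq (by rw [Nat.zero_add, ← hSa, ← hSl, hsum])
  intro i
  have h1 : A ↑i ≤ L ↑i := hALeq i i.2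
  rw [hAval, hLval] at h1
  -- sums equal and each ≤ gives equality
  by_contra hne
  have hlt : l' i < l i := lt_of_le_of_ne h1 hne
  have hle : ∀ j ∈ Finset.univ, l' j ≤ l j := by
    intro j _
    have := hALeq j j.2
    rwa [hAval, hLval] at this
  have := (Finset.sum_eq_sum_iff_of_le hle).1 hsum i (Finset.mem_univ i)
  omega
end
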